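/- arXiv:2512.02767 — 2 statements merged into one kernel-verified Lean document; each statement's English description precedes it below -/
import Mathlib

section
/- For any three jointly distributed random variables X, Y, W on a finite probability space, H(W) + I(X:Y|W) ≤ I(X:Y) + H(W|X) + H(W|Y). -/
open scoped BigOperators

namespace PaperIngleton

open Classical in
/-- Probability of an event under a pmf `p` on a finite sample space. -/
noncomputable def prob {Ω : Type*} [Fintype Ω] (p : Ω → ℝ) (E : Ω → Prop) : ℝ :=
  ∑ ω, if E ω then p ω else 0

/-- Shannon entropy of a finitely-valued random variable `X` under pmf `p`. -/
noncomputable def ent {Ω S : Type*} [Fintype Ω] [Fintype S] (p : Ω → ℝ) (X : Ω → S) : ℝ :=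
  -∑ s : S, prob p (fun ω => X ω = s) * Real.log (prob p (fun ω => X ω = s))

/-- Conditional entropy `H(X|Y)`. -/
noncomputable def condEnt {Ω S T : Type*} [Fintype Ω] [Fintype S] [Fintype T]
    (p : Ω → ℝ) (X : Ω → S) (Y : Ω → T) : ℝ :=
  ent p (fun ω => (X ω, Y ω)) - ent p Y

/-- Mutual information `I(X:Y)`. -/
noncomputable def mi {Ω S T : Type*} [Fintype Ω] [Fintype S] [Fintype T]
    (p : Ω → ℝ) (X : Ω → S) (Y : Ω → T) : ℝ :=
  ent p X + ent p Y - ent p (fun ω => (X ω, Y ω))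

/-- Conditional mutual information `I(X:Y|Z)`. -/
noncomputable def cmi {Ω S T U : Type*} [Fintype Ω] [Fintype S] [Fintype T] [Fintype U]
    (p : Ω → ℝ) (X : Ω → S) (Y : Ω → T) (Z : Ω → U) : ℝ :=
  ent p (fun ω => (X ω, Z ω)) + ent p (fun ω => (Y ω, Z ω))
    - ent p (fun ω => (X ω, Y ω, Z ω)) - ent p Z

end PaperIngleton

namespace PaperIngleton

open Classical in
lemma prob_nonneg' {Ω : Type} [Fintype Ω] (p : Ω → ℝ) (hp : ∀ ω, 0 ≤ p ω) (E : Ω → Prop) :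
    0 ≤ prob p E := by
  unfold prob
  apply Finset.sum_nonneg
  intro ω _
  split <;> simp [hp ω]

open Classical in
lemma ent_comp_le {Ω A C : Type} [Fintype Ω] [Fintype A] [Fintype C]
    (p : Ω → ℝ) (hp : ∀ ω, 0 ≤ p ω) (Z : Ω → A) (f : A → C) :
    ent p (fun ω => f (Z ω)) ≤ ent p Z := by
  set r : A → ℝ := fun z => prob p (fun ω => Z ω = z) with hr
  set q : C → ℝ := fun c => prob p (fun ω => f (Z ω) = c) with hqdef
  have hr0 : ∀ z, 0 ≤ r z := fun z => prob_nonneg' p hp _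
  have hq : ∀ c, q c = ∑ z, if f z = c then r z else 0 := by
    intro c
    simp only [hqdef, hr, prob]
    have step1 : ∀ z : A, (if f z = c then ∑ ω, (if Z ω = z then p ω else 0) else 0)
        = ∑ ω, if f z = c ∧ Z ω = z then p ω else 0 := by
      intro z
      by_cases h : f z = c <;> simp [h]
    simp_rw [step1]
    rw [Finset.sum_comm]
    apply Finset.sum_congr rfl
    intro ω _
    rw [Finset.sum_eq_single (Z ω)]
    · simp
    · intro b _ hb
      simp [Ne.symm hb]
    · simp
  have hle : ∀ z, r z ≤ q (f z) := by
    intro z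
    rw [hq]
    have := Finset.single_le_sum (f := fun b => if f b = f z then r b else 0)
      (fun b _ => by split <;> simp [hr0]) (Finset.mem_univ z)
    simpa using this
  unfold ent
  rw [neg_le_neg_iff]
  calc ∑ z, r z * Real.log (r z)
      ≤ ∑ z, r z * Real.log (q (f z)) := by
        apply Finset.sum_le_sum
        intro z _
        rcases eq_or_lt_of_le (hr0 z) with h | h
        · simp [← h]
        · exact mul_le_mul_of_nonneg_left (Real.log_le_log h (hle z)) (hr0 z)
    _ = ∑ c, q c * Real.log (q c) := by
        have : ∀ z : A, r z * Real.log (q (f z))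
            = ∑ c, if f z = c then r z * Real.log (q c) else 0 := by
          intro z; simp
        simp_rw [this]
        rw [Finset.sum_comm]
        apply Finset.sum_congr rfl
        intro c _
        rw [hq, Finset.sum_mul]
        apply Finset.sum_congr rfl
        intro z _
        split <;> simp_all


theorem stmt3 {Ω S T V : Type} [Fintype Ω] [Fintype S] [Fintype T] [Fintype V]
    (p : Ω → ℝ) (hp : ∀ ω, 0 ≤ p ω) (hp1 : ∑ ω, p ω = 1)
    (X : Ω → S) (Y : Ω → T) (W : Ω → V) :
    ent p W + cmi p X Y W ≤ mi p X Y + condEnt p W X + condEnt p W Y := by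
  have key : ent p (fun ω => (X ω, Y ω)) ≤ ent p (fun ω => (X ω, Y ω, W ω)) :=
    ent_comp_le p hp (fun ω => (X ω, Y ω, W ω)) (fun t => (t.1, t.2.1))
  have h1 : ent p (fun ω => (W ω, X ω)) ≤ ent p (fun ω => (X ω, W ω)) :=
    ent_comp_le p hp (fun ω => (X ω, W ω)) (fun t => (t.2, t.1))
  have h2 : ent p (fun ω => (X ω, W ω)) ≤ ent p (fun ω => (W ω, X ω)) :=
    ent_comp_le p hp (fun ω => (W ω, X ω)) (fun t => (t.2, t.1))
  have h3 : ent p (fun ω => (W ω, Y ω)) ≤ ent p (fun ω => (Y ω, W ω)) :=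
    ent_comp_le p hp (fun ω => (Y ω, W ω)) (fun t => (t.2, t.1))
  have h4 : ent p (fun ω => (Y ω, W ω)) ≤ ent p (fun ω => (W ω, Y ω)) :=
    ent_comp_le p hp (fun ω => (W ω, Y ω)) (fun t => (t.2, t.1))
  unfold cmi mi condEnt
  linarith

end PaperIngleton
end

section
/- Copy Lemma: For any finitely-valued jointly distributed random variables (X, Y, A), there exists a probability space carrying jointly distributed (X, Y, A, A') such that (X, A) and (X, A') have the same joint distribution, and A' is conditionally independent of (Y, A) given X. -/
open scoped BigOperators

namespace PaperIngleton

lemma prob_congr {Ω : Type*} [Fintype Ω] (p : Ω → ℝ) {E F : Ω → Prop}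
    (h : ∀ ω, E ω ↔ F ω) : prob p E = prob p F := by
  have hEF : E = F := funext fun ω => propext (h ω)
  rw [hEF]

/-- Copy Lemma. -/
theorem stmt8 {Ω S T U : Type} [Fintype Ω] [Fintype S] [Fintype T] [Fintype U]
    (p : Ω → ℝ) (hp : ∀ ω, 0 ≤ p ω) (hp1 : ∑ ω, p ω = 1)
    (X : Ω → S) (Y : Ω → T) (A : Ω → U) :
    ∃ (Ω' : Type) (_ : Fintype Ω') (p' : Ω' → ℝ)
      (X' : Ω' → S) (Y' : Ω' → T) (A' : Ω' → U) (A'' : Ω' → U),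
      (∀ ω, 0 ≤ p' ω) ∧ (∑ ω, p' ω = 1) ∧
      -- the new (X',Y',A') has the original joint distribution
      (∀ x y a, prob p' (fun ω => X' ω = x ∧ Y' ω = y ∧ A' ω = a)
              = prob p (fun ω => X ω = x ∧ Y ω = y ∧ A ω = a)) ∧
      -- (X',A'') and (X',A') have the same joint distribution
      (∀ x a, prob p' (fun ω => X' ω = x ∧ A'' ω = a)
            = prob p' (fun ω => X' ω = x ∧ A' ω = a)) ∧
      -- A'' is conditionally independent of (Y',A') given X'
      (∀ x y a a',
        prob p' (fun ω => X' ω = x ∧ Y' ω = y ∧ A' ω = a ∧ A'' ω = a')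
          * prob p' (fun ω => X' ω = x)
        = prob p' (fun ω => X' ω = x ∧ Y' ω = y ∧ A' ω = a)
          * prob p' (fun ω => X' ω = x ∧ A'' ω = a')) := by
 classical
  set Px : S → ℝ := fun x => prob p (fun ω => X ω = x) with hPx
  set P2 : S → U → ℝ := fun x a => prob p (fun ω => X ω = x ∧ A ω = a) with hP2
  have hPx_nonneg : ∀ x, 0 ≤ Px x := fun x =>
    Finset.sum_nonneg fun ω _ => by split <;> simp [hp ω]
  have hP2_nonneg : ∀ x a, 0 ≤ P2 x a := fun x a =>
    Finset.sum_nonneg fun ω _ => by split <;> simp [hp ω]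
  have hple : ∀ ω, p ω ≤ Px (X ω) := by
    intro ω
    have := Finset.single_le_sum
      (f := fun ω' => if X ω' = X ω then p ω' else 0)
      (fun i _ => by split <;> simp [hp i]) (Finset.mem_univ ω)
    simpa [hPx, prob] using this
  have hzero : ∀ ω, Px (X ω) = 0 → p ω = 0 := fun ω h =>
    le_antisymm (h ▸ hple ω) (hp ω)
  have hP2le : ∀ x a, P2 x a ≤ Px x := by
    intro x a
    refine Finset.sum_le_sum fun ω _ => ?_
    by_cases h : X ω = x ∧ A ω = a
    · simp [h, h.1]
    · split <;> [skip; split] <;> simp_all [hp ω]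
  have hsum2 : ∀ x, ∑ a, P2 x a = Px x := by
    intro x
    simp only [hP2, hPx, prob]
    rw [Finset.sum_comm]
    refine Finset.sum_congr rfl fun ω _ => ?_
    by_cases h : X ω = x
    · simp [h, Finset.sum_ite_eq]
    · simp [h]
  set p' : Ω × U → ℝ := fun z => p z.1 * P2 (X z.1) z.2 / Px (X z.1) with hp'
  have key : ∀ ω, ∑ u, p' (ω, u) = p ω := by
    intro ω
    simp only [hp']
    rw [← Finset.sum_div, ← Finset.mul_sum, hsum2]
    rcases eq_or_ne (Px (X ω)) 0 with h | h
    · simp [h, hzero ω h]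
    · field_simp
  -- marginalization over the second coordinate
  have hA : ∀ (C : Ω → Prop), prob p' (fun z => C z.1) = prob p C := by
    intro C
    simp only [prob]
    rw [Fintype.sum_prod_type]
    refine Finset.sum_congr rfl fun ω _ => ?_
    by_cases h : C ω
    · simp only [if_pos h]; exact key ω
    · simp [h]
  have hB : ∀ (C : Ω → Prop) (x : S) (a' : U), (∀ ω, C ω → X ω = x) →
      prob p' (fun z => C z.1 ∧ z.2 = a') = prob p C * (P2 x a' / Px x) := by
    intro C x a' hC
    simp only [prob]
    rw [Fintype.sum_prod_type, Finset.sum_mul]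
    refine Finset.sum_congr rfl fun ω _ => ?_
    by_cases h : C ω
    · simp only [h, true_and]
      rw [Finset.sum_ite_eq' Finset.univ a' (fun u => p' (ω, u))]
      simp [hp', hC ω h, mul_div_assoc]
    · simp [h]
  refine ⟨Ω × U, instFintypeProd Ω U, p', fun z => X z.1, fun z => Y z.1, fun z => A z.1,
    fun z => z.2, ?_, ?_, ?_, ?_, ?_⟩
  · intro z
    exact div_nonneg (mul_nonneg (hp z.1) (hP2_nonneg _ _)) (hPx_nonneg _)
  · rw [Fintype.sum_prod_type]
    simp only [key]
    exact hp1
  · intro x y a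
    beta_reduce
    exact hA (fun ω => X ω = x ∧ Y ω = y ∧ A ω = a)
  · intro x a
    beta_reduce
    have h1 := hB (fun ω => X ω = x) x a (fun ω h => h)
    have h2 := hA (fun ω => X ω = x ∧ A ω = a)
    rw [h1, h2]
    rcases eq_or_ne (Px x) 0 with h | h
    · have : P2 x a = 0 := le_antisymm (h ▸ hP2le x a) (hP2_nonneg x a)
      simp only [hP2, hPx] at *
      rw [this, h]
      simp
    · simp only [hP2, hPx] at *
      rw [mul_div_cancel₀ _ h]
  · intro x y a a'
    beta_reduce
    have h0 : prob p' (fun z : Ω × U => X z.1 = x ∧ Y z.1 = y ∧ A z.1 = a ∧ z.2 = a')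
        = prob p' (fun z => (X z.1 = x ∧ Y z.1 = y ∧ A z.1 = a) ∧ z.2 = a') :=
      prob_congr _ (fun ω => by tauto)
    have h1 : prob p' (fun z : Ω × U => (X z.1 = x ∧ Y z.1 = y ∧ A z.1 = a) ∧ z.2 = a')
        = prob p (fun ω => X ω = x ∧ Y ω = y ∧ A ω = a) * (P2 x a' / Px x) :=
      hB (fun ω => X ω = x ∧ Y ω = y ∧ A ω = a) x a' (fun ω h => h.1)
    have h2 : prob p' (fun z : Ω × U => X z.1 = x ∧ Y z.1 = y ∧ A z.1 = a)
        = prob p (fun ω => X ω = x ∧ Y ω = y ∧ A ω = a) :=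
      hA (fun ω => X ω = x ∧ Y ω = y ∧ A ω = a)
    have h3 : prob p' (fun z : Ω × U => X z.1 = x ∧ z.2 = a')
        = prob p (fun ω => X ω = x) * (P2 x a' / Px x) :=
      hB (fun ω => X ω = x) x a' (fun ω h => h)
    have h4 : prob p' (fun z : Ω × U => X z.1 = x) = prob p (fun ω => X ω = x) :=
      hA (fun ω => X ω = x)
    rw [h0, h1, h2, h3, h4]
    set P3 := prob p (fun ω => X ω = x ∧ Y ω = y ∧ A ω = a) with hP3
    have hP3le : P3 ≤ Px x := by
      refine Finset.sum_le_sum fun ω _ => ?_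
      by_cases h : X ω = x ∧ Y ω = y ∧ A ω = a
      · simp [h, h.1]
      · split <;> [skip; split] <;> simp_all [hp ω]
    have hP3nn : 0 ≤ P3 := Finset.sum_nonneg fun ω _ => by split <;> simp [hp ω]
    rcases eq_or_ne (Px x) 0 with h | h
    · have : P3 = 0 := le_antisymm (h ▸ hP3le) hP3nn
      rw [this]; ring
    · field_simp

end PaperIngleton
end
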